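/- Let C be a category, T : C → C a functor with both a monad structure 𝐓 = (T, m, u) and a comonad structure 𝐓̄ = (T, d, e). Let F̄ : C → C^𝐓̄ be the cofree coalgebra functor (right adjoint to the forgetful Ū) and F, U the free/forgetful functors for 𝐓. Then the monoid of natural transformations F̄ U → F̄ U (under composition) is isomorphic to the monoid of natural transformations φ : T → T under the convolution product φ ∗ φ' := m ∘ Tφ' ∘ φT ∘ d. -/

import Mathlib

open CategoryTheory


def auxF {C : Type*} [Category C] {M : Monad C} {G : Comonad C}
    (a : (M.forget ⋙ G.cofree) ⟶ (M.forget ⋙ G.cofree)) (X : C) :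
    G.obj (M.obj X) ⟶ G.obj (M.obj X) :=
  (a.app (M.free.obj X)).f

def auxA {C : Type*} [Category C] {M : Monad C} {G : Comonad C}
    (a : (M.forget ⋙ G.cofree) ⟶ (M.forget ⋙ G.cofree)) (A : M.Algebra) :
    G.obj A.A ⟶ G.obj A.A :=
  (a.app A).f

theorem aux_conv {C : Type*} [Category C] (M : Monad C)
    (ε : (M : C ⥤ C) ⟶ 𝟭 C) (δ : (M : C ⥤ C) ⟶ (M : C ⥤ C) ⋙ (M : C ⥤ C))
    (gco : ∀ X : C, δ.app X ≫ (M : C ⥤ C).map (δ.app X)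
      = δ.app X ≫ δ.app ((M : C ⥤ C).obj X))
    (glc : ∀ X : C, δ.app X ≫ ε.app ((M : C ⥤ C).obj X) = 𝟙 _)
    (grc : ∀ X : C, δ.app X ≫ (M : C ⥤ C).map (ε.app X) = 𝟙 _) :
    ∃ Φ : ((M.forget ⋙ (Comonad.mk M.toFunctor ε δ gco glc grc).cofree) ⟶
        (M.forget ⋙ (Comonad.mk M.toFunctor ε δ gco glc grc).cofree)) ≃
        ((M : C ⥤ C) ⟶ (M : C ⥤ C)),
      (∀ a b,
        Φ (a ≫ b) = δ ≫ Functor.whiskerRight (Φ a) (M : C ⥤ C) ≫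
          Functor.whiskerLeft (M : C ⥤ C) (Φ b) ≫ M.μ) ∧
      Φ (𝟙 _) = ε ≫ M.η := by
  refine ⟨⟨fun a => ⟨fun X => (M : C ⥤ C).map (M.η.app X) ≫ auxF a X ≫
        ε.app ((M : C ⥤ C).obj X), ?_⟩,
      fun φ => ⟨fun A => ⟨δ.app A.A ≫ (M : C ⥤ C).map (φ.app A.A ≫ A.a), ?_⟩, ?_⟩,
      ?_, ?_⟩, ?_, ?_⟩
  · -- naturality of toFun
    intro X Y f
    have h1 : M.toFunctor.map (M.toFunctor.map f) ≫ auxF a Y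
        = auxF a X ≫ M.toFunctor.map (M.toFunctor.map f) := by
      have := congrArg Comonad.Coalgebra.Hom.f (a.naturality (M.free.map f))
      exact this
    have h0 : f ≫ M.η.app Y = M.η.app X ≫ M.toFunctor.map f := by
      simpa using M.η.naturality f
    have h2 : M.toFunctor.map (M.toFunctor.map f) ≫ ε.app (M.toFunctor.obj Y)
        = ε.app (M.toFunctor.obj X) ≫ M.toFunctor.map f := by
      simpa using ε.naturality (M.toFunctor.map f)
    erw [← Functor.map_comp_assoc, h0, Functor.map_comp_assoc, reassoc_of% h1, h2]
    simp
  · -- coalgebra hom condition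
    dsimp only [Functor.comp_obj, Monad.forget_obj, Comonad.cofree_obj_A,
      Comonad.cofree_obj_a]
    change δ.app A.A ≫ M.map (δ.app A.A ≫ M.map (φ.app A.A ≫ A.a)) =
      (δ.app A.A ≫ M.map (φ.app A.A ≫ A.a)) ≫ δ.app A.A
    have h3 : δ.app (M.toFunctor.obj A.A) ≫ M.toFunctor.map (M.toFunctor.map (φ.app A.A ≫ A.a))
        = M.toFunctor.map (φ.app A.A ≫ A.a) ≫ δ.app A.A := by
      simpa using (δ.naturality (φ.app A.A ≫ A.a)).symm
    rw [Functor.map_comp, ← Category.assoc, gco, Category.assoc, h3]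
    simp
  · -- naturality of invFun
    intro A B g
    ext
    dsimp only [Functor.comp_map, Monad.forget_map, Comonad.Coalgebra.comp_f,
      Comonad.cofree_map_f]
    change M.map g.f ≫ δ.app B.A ≫ M.map (φ.app B.A ≫ B.a) =
      (δ.app A.A ≫ M.map (φ.app A.A ≫ A.a)) ≫ M.map g.f
    have h4 : M.toFunctor.map g.f ≫ δ.app B.A
        = δ.app A.A ≫ M.toFunctor.map (M.toFunctor.map g.f) := by
      simpa using δ.naturality g.f
    have h5 : M.toFunctor.map g.f ≫ φ.app B.A ≫ B.a = (φ.app A.A ≫ A.a) ≫ g.f := by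
      rw [reassoc_of% (φ.naturality g.f), g.h]
      simp
    rw [reassoc_of% h4, ← Functor.map_comp, h5, Functor.map_comp]
    simp
  · -- right_inv
    intro a
    ext A
    change δ.app A.A ≫ M.map ((M.map (M.η.app A.A) ≫ auxF a A.A ≫ ε.app (M.obj A.A)) ≫ A.a) =
      auxA a A
    have h7 : δ.app A.A ≫ M.toFunctor.map (M.toFunctor.map (M.η.app A.A))
        = M.toFunctor.map (M.η.app A.A) ≫ δ.app (M.toFunctor.obj A.A) := by
      simpa using (δ.naturality (M.η.app A.A)).symm
    have h8 : δ.app (M.toFunctor.obj A.A) ≫ M.toFunctor.map (auxF a A.A)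
        = auxF a A.A ≫ δ.app (M.toFunctor.obj A.A) := by
      exact (a.app (M.free.obj A.A)).h
    have h10 : M.toFunctor.map A.a ≫ auxA a A
        = auxF a A.A ≫ M.toFunctor.map A.a := by
      have := congrArg Comonad.Coalgebra.Hom.f
        (a.naturality (show M.free.obj A.A ⟶ A from ⟨A.a, A.assoc.symm⟩))
      exact this
    simp only [Functor.map_comp, Category.assoc]
    rw [reassoc_of% h7, reassoc_of% h8, ← Category.assoc (δ.app _), grc, Category.id_comp,
      ← h10, ← Functor.map_comp_assoc, A.unit]
    simp
  · -- left_inv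
    intro φ
    ext X
    change M.map (M.η.app X) ≫ (δ.app (M.obj X) ≫ M.map (φ.app (M.obj X) ≫ M.μ.app X)) ≫
      ε.app (M.obj X) = φ.app X
    have h6 : M.toFunctor.map (φ.app (M.toFunctor.obj X) ≫ M.μ.app X) ≫ ε.app (M.toFunctor.obj X)
        = ε.app (M.toFunctor.obj (M.toFunctor.obj X)) ≫ φ.app (M.toFunctor.obj X) ≫ M.μ.app X := by
      simpa using ε.naturality (φ.app (M.toFunctor.obj X) ≫ M.μ.app X)
    rw [Category.assoc, h6, ← Category.assoc (δ.app _), glc, Category.id_comp,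
      reassoc_of% (φ.naturality (M.η.app X)), M.right_unit]
    simp
  · -- mul
    intro a b
    ext X
    change M.map (M.η.app X) ≫ (auxF a X ≫ auxF b X) ≫ ε.app (M.obj X) =
      δ.app X ≫ M.map (M.map (M.η.app X) ≫ auxF a X ≫ ε.app (M.obj X)) ≫
        (M.map (M.η.app (M.obj X)) ≫ auxF b (M.obj X) ≫ ε.app (M.obj (M.obj X))) ≫ M.μ.app X
    have h7 : δ.app X ≫ M.toFunctor.map (M.toFunctor.map (M.η.app X))
        = M.toFunctor.map (M.η.app X) ≫ δ.app (M.toFunctor.obj X) := by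
      simpa using (δ.naturality (M.η.app X)).symm
    have h8 : δ.app (M.toFunctor.obj X) ≫ M.toFunctor.map (auxF a X)
        = auxF a X ≫ δ.app (M.toFunctor.obj X) := by
      exact (a.app (M.free.obj X)).h
    have h11 : ε.app (M.toFunctor.obj (M.toFunctor.obj X)) ≫ M.μ.app X
        = M.toFunctor.map (M.μ.app X) ≫ ε.app (M.toFunctor.obj X) := by
      simpa using (ε.naturality (M.μ.app X)).symm
    have h12 : M.toFunctor.map (M.μ.app X) ≫ auxF b X
        = auxF b (M.toFunctor.obj X) ≫ M.toFunctor.map (M.μ.app X) := by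
      have := congrArg Comonad.Coalgebra.Hom.f
        (b.naturality (show M.free.obj (M.toFunctor.obj X) ⟶ M.free.obj X from
          ⟨M.μ.app X, M.assoc X⟩))
      exact this
    have h13 : M.toFunctor.map (M.η.app (M.toFunctor.obj X)) ≫ M.toFunctor.map (M.μ.app X)
        = 𝟙 _ := by
      rw [← Functor.map_comp, M.left_unit]
      simp
    simp only [Equiv.coe_fn_mk, NatTrans.comp_app, Comonad.Coalgebra.comp_f,
      Functor.map_comp, Category.assoc]
    rw [reassoc_of% h7, reassoc_of% h8, ← Category.assoc (δ.app _), grc, Category.id_comp,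
      h11, ← reassoc_of% h12, reassoc_of% h13]
  · -- unit
    ext X
    change M.map (M.η.app X) ≫ 𝟙 (M.obj (M.obj X)) ≫ ε.app (M.obj X) = ε.app X ≫ M.η.app X
    simpa using ε.naturality (M.η.app X)

theorem cofree_forget_end_monoid_iso_convolution {C : Type*} [Category C]
    (T : Monad C) (G : Comonad C) (h : (G : C ⥤ C) = (T : C ⥤ C)) :
    ∃ Φ : ((T.forget ⋙ G.cofree) ⟶ (T.forget ⋙ G.cofree)) ≃
        ((T : C ⥤ C) ⟶ (T : C ⥤ C)),
      (∀ a b : (T.forget ⋙ G.cofree) ⟶ (T.forget ⋙ G.cofree),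
        Φ (a ≫ b) =
          (eqToHom h.symm ≫ G.δ ≫
              eqToHom (show (G : C ⥤ C) ⋙ (G : C ⥤ C) = (T : C ⥤ C) ⋙ (T : C ⥤ C) by
                rw [h])) ≫
            Functor.whiskerRight (Φ a) (T : C ⥤ C) ≫ Functor.whiskerLeft (T : C ⥤ C) (Φ b) ≫ T.μ) ∧
      Φ (𝟙 (T.forget ⋙ G.cofree)) = (eqToHom h.symm ≫ G.ε) ≫ T.η := by
  obtain ⟨GF, ε, δ, gco, glc, grc⟩ := G
  change GF = _ at h
  subst h
  simp only [eqToHom_refl, Category.id_comp, Category.comp_id]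
  exact aux_conv T ε δ gco glc grc
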